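/- Existence and uniqueness of the stationary distribution: an irreducible aperiodic stochastic matrix W has a unique stationary distribution v with strictly positive components satisfying v_i = Σ_j v_j W_{ji} for all i. -/

import Mathlib

open Finset Filter Topology

namespace PFaux

variable {N : ℕ}

lemma pow_entry_nonneg {W : Matrix (Fin N) (Fin N) ℝ} (h : ∀ i j, 0 ≤ W i j) :
    ∀ (k : ℕ) (i j : Fin N), 0 ≤ (W ^ k) i j := by
  intro k
  induction k with
  | zero =>
    intro i j
    simp [Matrix.one_apply]
    split <;> norm_num
  | succ k ih =>
    intro i j
    rw [pow_succ, Matrix.mul_apply]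
    exact Finset.sum_nonneg fun l _ => mul_nonneg (ih i l) (h l j)

lemma pow_row_sum {W : Matrix (Fin N) (Fin N) ℝ} (h : ∀ i, ∑ j, W i j = 1) :
    ∀ (k : ℕ) (i : Fin N), ∑ j, (W ^ k) i j = 1 := by
  intro k
  induction k with
  | zero => intro i; simp [Matrix.one_apply]
  | succ k ih =>
    intro i
    simp only [pow_succ, Matrix.mul_apply]
    rw [Finset.sum_comm]
    calc ∑ l, ∑ j, (W ^ k) i l * W l j
        = ∑ l, (W ^ k) i l * ∑ j, W l j := by simp [Finset.mul_sum]
      _ = 1 := by simp [h, ih]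

lemma stationary_pow {W : Matrix (Fin N) (Fin N) ℝ} {u : Fin N → ℝ}
    (hu : ∀ i, u i = ∑ j, u j * W j i) :
    ∀ (k : ℕ) (i : Fin N), u i = ∑ j, u j * (W ^ k) j i := by
  intro k
  induction k with
  | zero => intro i; simp [Matrix.one_apply]
  | succ k ih =>
    intro i
    rw [pow_succ, ]
    calc u i = ∑ l, u l * W l i := hu i
      _ = ∑ l, (∑ j, u j * (W ^ k) j l) * W l i := by
          refine Finset.sum_congr rfl fun l _ => by rw [← ih l]
      _ = ∑ j, u j * (W ^ k * W) j i := by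
          simp only [Matrix.mul_apply, Finset.sum_mul, Finset.mul_sum]
          rw [Finset.sum_comm]
          exact Finset.sum_congr rfl fun j _ => Finset.sum_congr rfl fun l _ => by ring

end PFaux

namespace PFaux

lemma exists_pos_pow {W : Matrix (Fin N) (Fin N) ℝ} (hWnonneg : ∀ i j, 0 ≤ W i j)
    (hWrow : ∀ i, ∑ j, W i j = 1) {k : ℕ} (hk : ∀ i j, 0 < (W ^ k) i j) :
    ∀ i j, 0 < (W ^ (k + 1)) i j := by
  intro i j
  rw [pow_succ', Matrix.mul_apply]
  have hex : ∃ l, 0 < W i l := by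
    by_contra h
    push_neg at h
    have : ∀ l, W i l = 0 := fun l => le_antisymm (h l) (hWnonneg i l)
    have h1 := hWrow i
    rw [Finset.sum_congr rfl fun l _ => this l] at h1
    simp at h1
  obtain ⟨l, hl⟩ := hex
  refine Finset.sum_pos' (fun m _ => mul_nonneg (hWnonneg i m) ((hk m j).le)) ?_
  exact ⟨l, Finset.mem_univ l, mul_pos hl (hk l j)⟩

lemma stationary_pos {W : Matrix (Fin N) (Fin N) ℝ} {u : Fin N → ℝ}
    (hnn : ∀ j, 0 ≤ u j) (hsum : ∑ j, u j = 1)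
    (hu : ∀ i, u i = ∑ j, u j * W j i)
    {K : ℕ} (hK : ∀ i j, 0 < (W ^ K) i j) : ∀ i, 0 < u i := by
  intro i
  have hex : ∃ j, 0 < u j := by
    by_contra h
    push_neg at h
    have : ∀ j, u j = 0 := fun j => le_antisymm (h j) (hnn j)
    rw [Finset.sum_congr rfl fun j _ => this j] at hsum
    simp at hsum
  obtain ⟨j0, hj0⟩ := hex
  have := stationary_pow hu K i
  rw [this]
  refine Finset.sum_pos' (fun j _ => mul_nonneg (hnn j) (hK j i).le) ?_
  exact ⟨j0, Finset.mem_univ j0, mul_pos hj0 (hK j0 i)⟩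

lemma stationary_unique {W : Matrix (Fin N) (Fin N) ℝ} (hN : 0 < N)
    {u v : Fin N → ℝ}
    (hunn : ∀ j, 0 ≤ u j) (husum : ∑ j, u j = 1) (hu : ∀ i, u i = ∑ j, u j * W j i)
    (hvsum : ∑ j, v j = 1) (hv : ∀ i, v i = ∑ j, v j * W j i)
    (hvpos : ∀ j, 0 < v j)
    {K : ℕ} (hK : ∀ i j, 0 < (W ^ K) i j) : u = v := by
  haveI : Nonempty (Fin N) := ⟨⟨0, hN⟩⟩
  obtain ⟨i0, -, hi0⟩ := Finset.exists_min_image Finset.univ (fun i => u i / v i)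
    ⟨_, Finset.mem_univ (Classical.arbitrary (Fin N))⟩
  set c := u i0 / v i0 with hc
  have hcle : ∀ j, c * v j ≤ u j := by
    intro j
    have := hi0 j (Finset.mem_univ j)
    rw [div_le_div_iff₀ (hvpos i0) (hvpos j)] at this
    rw [hc, div_mul_eq_mul_div, div_le_iff₀ (hvpos i0)]
    exact this
  set x : Fin N → ℝ := fun j => u j - c * v j with hx
  have hxnn : ∀ j, 0 ≤ x j := fun j => sub_nonneg.mpr (hcle j)
  have hxi0 : x i0 = 0 := by
    simp only [hx, hc]
    rw [div_mul_eq_mul_div, mul_div_assoc, div_self (hvpos i0).ne', mul_one, sub_self]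
  have hxstat : ∀ i, x i = ∑ j, x j * (W ^ K) j i := by
    intro i
    have h1 := stationary_pow hu K i
    have h2 := stationary_pow hv K i
    simp only [hx]
    rw [h1, h2, Finset.mul_sum, ← Finset.sum_sub_distrib]
    exact Finset.sum_congr rfl fun j _ => by ring
  have hxzero : ∀ j, x j = 0 := by
    have h0 : ∑ j, x j * (W ^ K) j i0 = 0 := by rw [← hxstat i0, hxi0]
    have hterm := (Finset.sum_eq_zero_iff_of_nonneg
      (fun j _ => mul_nonneg (hxnn j) (hK j i0).le)).mp h0
    intro j
    have := hterm j (Finset.mem_univ j)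
    exact (mul_eq_zero.mp this).resolve_right (hK j i0).ne'
  have hc1 : c = 1 := by
    have : ∑ j, u j = ∑ j, c * v j := by
      refine Finset.sum_congr rfl fun j _ => ?_
      have := hxzero j
      simp only [hx] at this
      linarith
    rw [husum, ← Finset.mul_sum, hvsum, mul_one] at this
    exact this.symm
  funext j
  have := hxzero j
  simp only [hx, hc1, one_mul] at this
  linarith

end PFaux


namespace PFaux

variable {N : ℕ}

lemma pow_entry_nonneg' {W : Matrix (Fin N) (Fin N) ℝ} (h : ∀ i j, 0 ≤ W i j) :
    ∀ (k : ℕ) (i j : Fin N), 0 ≤ (W ^ k) i j := by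
  intro k
  induction k with
  | zero => intro i j; simp [Matrix.one_apply]; split <;> norm_num
  | succ k ih =>
    intro i j
    rw [pow_succ, Matrix.mul_apply]
    exact Finset.sum_nonneg fun l _ => mul_nonneg (ih i l) (h l j)

lemma pow_row_sum' {W : Matrix (Fin N) (Fin N) ℝ} (h : ∀ i, ∑ j, W i j = 1) :
    ∀ (k : ℕ) (i : Fin N), ∑ j, (W ^ k) i j = 1 := by
  intro k
  induction k with
  | zero => intro i; simp [Matrix.one_apply]
  | succ k ih =>
    intro i
    simp only [pow_succ, Matrix.mul_apply]
    rw [Finset.sum_comm]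
    calc ∑ l, ∑ j, (W ^ k) i l * W l j
        = ∑ l, (W ^ k) i l * ∑ j, W l j := by simp [Finset.mul_sum]
      _ = 1 := by simp [h, ih]

lemma stationary_exists (hN : 0 < N) {W : Matrix (Fin N) (Fin N) ℝ}
    (hWnonneg : ∀ i j, 0 ≤ W i j) (hWrow : ∀ i, ∑ j, W i j = 1) :
    ∃ v : Fin N → ℝ, (∀ j, 0 ≤ v j) ∧ (∑ j, v j = 1) ∧ (∀ i, v i = ∑ j, v j * W j i) := by
  set u0 : Fin N → ℝ := fun _ => (N : ℝ)⁻¹ with hu0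
  have hNpos : (0 : ℝ) < N := by exact_mod_cast hN
  set s : ℕ → Fin N → ℝ := fun m i => ∑ j, u0 j * (W ^ m) j i with hs
  have hsnn : ∀ m i, 0 ≤ s m i := fun m i =>
    Finset.sum_nonneg fun j _ => mul_nonneg (by positivity) (pow_entry_nonneg' hWnonneg m j i)
  have hssum : ∀ m, ∑ i, s m i = 1 := by
    intro m
    simp only [hs]
    rw [Finset.sum_comm]
    calc ∑ j, ∑ i, u0 j * (W ^ m) j i
        = ∑ j : Fin N, u0 j * 1 := by
          refine Finset.sum_congr rfl fun j _ => ?_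
          rw [← Finset.mul_sum, pow_row_sum' hWrow m j]
      _ = 1 := by
          simp only [hu0, mul_one, Finset.sum_const, Finset.card_univ, Fintype.card_fin,
            nsmul_eq_mul]
          field_simp
  have hsle1 : ∀ m i, s m i ≤ 1 := by
    intro m i
    calc s m i ≤ ∑ i', s m i' := Finset.single_le_sum (fun i' _ => hsnn m i') (Finset.mem_univ i)
      _ = 1 := hssum m
  have hstep : ∀ m i, ∑ j, s m j * W j i = s (m + 1) i := by
    intro m i
    simp only [hs, pow_succ, Matrix.mul_apply, Finset.sum_mul, Finset.mul_sum]
    rw [Finset.sum_comm]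
    exact Finset.sum_congr rfl fun j _ => Finset.sum_congr rfl fun l _ => by ring
  set a : ℕ → Fin N → ℝ := fun n i => ((n : ℝ) + 1)⁻¹ * ∑ m ∈ Finset.range (n + 1), s m i
    with ha
  have hnp1 : ∀ n : ℕ, (0 : ℝ) < (n : ℝ) + 1 := fun n => by positivity
  have hmem : ∀ n, a n ∈ stdSimplex ℝ (Fin N) := by
    intro n
    constructor
    · intro i
      exact mul_nonneg (by positivity) (Finset.sum_nonneg fun m _ => hsnn m i)
    · simp only [ha]
      rw [← Finset.mul_sum, Finset.sum_comm]
      calc ((n : ℝ) + 1)⁻¹ * ∑ m ∈ Finset.range (n + 1), ∑ i, s m i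
          = ((n : ℝ) + 1)⁻¹ * ∑ m ∈ Finset.range (n + 1), (1 : ℝ) := by
            rw [Finset.sum_congr rfl fun m _ => hssum m]
        _ = 1 := by
            simp only [Finset.sum_const, Finset.card_range, nsmul_eq_mul, mul_one, Nat.cast_add, Nat.cast_one]
            field_simp
  obtain ⟨v, hvmem, φ, hφ, hlim⟩ := (isCompact_stdSimplex ℝ (Fin N)).tendsto_subseq hmem
  have hkey : ∀ n i, ∑ j, a n j * W j i - a n i = ((n : ℝ) + 1)⁻¹ * (s (n + 1) i - s 0 i) := by
    intro n i
    have h1 : ∑ j, a n j * W j i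
        = ((n : ℝ) + 1)⁻¹ * ∑ m ∈ Finset.range (n + 1), s (m + 1) i := by
      simp only [ha]
      calc ∑ j, ((n : ℝ) + 1)⁻¹ * (∑ m ∈ Finset.range (n + 1), s m j) * W j i
          = ((n : ℝ) + 1)⁻¹ * ∑ j, (∑ m ∈ Finset.range (n + 1), s m j) * W j i := by
            rw [Finset.mul_sum]; exact Finset.sum_congr rfl fun j _ => by ring
        _ = ((n : ℝ) + 1)⁻¹ * ∑ m ∈ Finset.range (n + 1), ∑ j, s m j * W j i := by
            congr 1
            rw [Finset.sum_comm]
            exact Finset.sum_congr rfl fun j _ => Finset.sum_mul ..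
        _ = ((n : ℝ) + 1)⁻¹ * ∑ m ∈ Finset.range (n + 1), s (m + 1) i := by
            congr 1
            exact Finset.sum_congr rfl fun m _ => hstep m i
    have h2 : ∑ m ∈ Finset.range (n + 1), s (m + 1) i
        = ∑ m ∈ Finset.range (n + 1), s m i + s (n + 1) i - s 0 i := by
      have := Finset.sum_range_succ' (fun m => s m i) (n + 1)
      have h3 := Finset.sum_range_succ (fun m => s m i) (n + 1)
      linarith
    rw [h1, h2]
    simp only [ha]
    ring
  have hvstat : ∀ i, v i = ∑ j, v j * W j i := by
    intro i
    have hcont : Continuous (fun x : Fin N → ℝ => ∑ j, x j * W j i - x i) := by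
      exact (continuous_finset_sum _ fun j _ => (continuous_apply j).mul continuous_const).sub
        (continuous_apply i)
    have h1 : Tendsto (fun n => ∑ j, a (φ n) j * W j i - a (φ n) i) atTop
        (𝓝 (∑ j, v j * W j i - v i)) := (hcont.tendsto v).comp hlim
    have h2 : Tendsto (fun n => ∑ j, a (φ n) j * W j i - a (φ n) i) atTop (𝓝 0) := by
      rw [tendsto_zero_iff_abs_tendsto_zero]
      refine squeeze_zero (fun n => abs_nonneg _) (fun n => ?_)
        (by simpa [one_div] using tendsto_one_div_add_atTop_nhds_zero_nat)
      show |∑ j, a (φ n) j * W j i - a (φ n) i| ≤ _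
      rw [hkey (φ n) i, abs_mul, abs_of_pos (inv_pos.mpr (hnp1 (φ n)))]
      have hb : |s (φ n + 1) i - s 0 i| ≤ 1 := by
        rw [abs_sub_le_iff]
        constructor <;> [skip; skip] <;>
          · have := hsnn (φ n + 1) i; have := hsle1 (φ n + 1) i
            have := hsnn 0 i; have := hsle1 0 i
            linarith
      calc ((φ n : ℝ) + 1)⁻¹ * |s (φ n + 1) i - s 0 i|
          ≤ ((φ n : ℝ) + 1)⁻¹ * 1 := by
            exact mul_le_mul_of_nonneg_left hb (le_of_lt (inv_pos.mpr (hnp1 (φ n))))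
        _ = ((φ n : ℝ) + 1)⁻¹ := mul_one _
        _ ≤ ((n : ℝ) + 1)⁻¹ := by
            apply inv_anti₀ (hnp1 n)
            have h' : (n : ℝ) ≤ (φ n : ℝ) := by exact_mod_cast hφ.le_apply
            linarith
        _ = 1 / ((n : ℝ) + 1) := (one_div _).symm
    have := tendsto_nhds_unique h1 h2
    linarith
  exact ⟨v, hvmem.1, hvmem.2, hvstat⟩

end PFaux


/-- Perron–Frobenius for stochastic matrices: an irreducible aperiodic row-stochastic
matrix has a unique stationary distribution, and it has strictly positive components.
(Primitivity — some power has all entries positive — is equivalent to irreducibility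
plus aperiodicity for stochastic matrices.) -/
theorem stationary_distribution_exists_unique (N : ℕ) (hN : 0 < N)
    (W : Matrix (Fin N) (Fin N) ℝ) (hWnonneg : ∀ i j, 0 ≤ W i j)
    (hWrow : ∀ i, ∑ j, W i j = 1)
    (hWprim : ∃ k : ℕ, ∀ i j, 0 < (W ^ k) i j) :
    ∃ v : Fin N → ℝ,
      (∀ j, 0 < v j) ∧ (∑ j, v j = 1) ∧ (∀ i, v i = ∑ j, v j * W j i) ∧
      ∀ u : Fin N → ℝ, (∀ j, 0 ≤ u j) → (∑ j, u j = 1) →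
        (∀ i, u i = ∑ j, u j * W j i) → u = v := by
  obtain ⟨k, hk⟩ := hWprim
  have hK : ∀ i j, 0 < (W ^ (k + 1)) i j := PFaux.exists_pos_pow hWnonneg hWrow hk
  obtain ⟨v, hvnn, hvsum, hvstat⟩ := PFaux.stationary_exists hN hWnonneg hWrow
  have hvpos : ∀ j, 0 < v j := PFaux.stationary_pos hvnn hvsum hvstat hK
  exact ⟨v, hvpos, hvsum, hvstat, fun u hunn husum hustat =>
    PFaux.stationary_unique hN hunn husum hustat hvsum hvstat hvpos hK⟩
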